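/- Let G : ℕ → ℂ be multiplicative with finitely many bad primes and Ramanujan conductor N(G). Then R_G(a) converges with R_G(a) = 0 for every a ∈ ℕ if and only if the coprime series S_G(N(G)) = Σ_{gcd(r,N(G))=1} G(r)·μ(r) converges to 0. -/

import Mathlib

open Filter Finset

noncomputable def mu (n : ℕ) : ℂ := ((ArithmeticFunction.moebius n : ℤ) : ℂ)

/-- Ramanujan sum `c_q(a) = ∑_{d ∣ gcd(q,a)} d · μ(q/d)` (Kluyver's formula). -/
noncomputable def cR (q a : ℕ) : ℂ :=
  ∑ d ∈ (Nat.gcd q a).divisors, (d : ℂ) * mu (q / d)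

/-- Partial sum of the Ramanujan series `R_G(a,x) = ∑_{q ≤ x} G(q) c_q(a)`. -/
noncomputable def RS (G : ℕ → ℂ) (a : ℕ) (x : ℝ) : ℂ :=
  ∑ q ∈ Finset.Icc 1 ⌊x⌋₊, G q * cR q a

/-- Partial sum of the coprime series `S_G(a,x) = ∑_{r ≤ x, (r,a)=1} G(r) μ(r)`. -/
noncomputable def SS (G : ℕ → ℂ) (a : ℕ) (x : ℝ) : ℂ :=
  ∑ r ∈ (Finset.Icc 1 ⌊x⌋₊).filter fun r => Nat.gcd r a = 1, G r * mu r

/-- Partial sum of the Lucht series `L_G(d,x) = ∑_{K ≤ x} μ(K) G(dK)`. -/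
noncomputable def LS (G : ℕ → ℂ) (d : ℕ) (x : ℝ) : ℂ :=
  ∑ K ∈ Finset.Icc 1 ⌊x⌋₊, mu K * G (d * K)

def RTendsto (G : ℕ → ℂ) (a : ℕ) (L : ℂ) : Prop :=
  Tendsto (fun x : ℝ => RS G a x) atTop (nhds L)

def RConv (G : ℕ → ℂ) (a : ℕ) : Prop := ∃ L, RTendsto G a L

def STendsto (G : ℕ → ℂ) (a : ℕ) (L : ℂ) : Prop :=
  Tendsto (fun x : ℝ => SS G a x) atTop (nhds L)

def SConv (G : ℕ → ℂ) (a : ℕ) : Prop := ∃ L, STendsto G a L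

def LTendsto (G : ℕ → ℂ) (d : ℕ) (L : ℂ) : Prop :=
  Tendsto (fun x : ℝ => LS G d x) atTop (nhds L)

def LConv (G : ℕ → ℂ) (d : ℕ) : Prop := ∃ L, LTendsto G d L

/-- `G` is multiplicative: `G(ab) = G(a)G(b)` for coprime positive `a, b`. -/
def IsMult (G : ℕ → ℂ) : Prop :=
  ∀ a b : ℕ, 0 < a → 0 < b → Nat.Coprime a b → G (a * b) = G a * G b

/-- `G` is completely multiplicative. -/
def IsCM (G : ℕ → ℂ) : Prop :=
  ∀ a b : ℕ, 0 < a → 0 < b → G (a * b) = G a * G b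

/-- The completely multiplicative index `w_{p,G}`: the largest `w ∈ ℕ` with
`G(p^k) = G(p)^k` for all `1 ≤ k ≤ w`, and `⊤` if this holds for all `k`. -/
noncomputable def cmIndex (G : ℕ → ℂ) (p : ℕ) : ℕ∞ :=
  ⨆ w ∈ {n : ℕ | ∀ k : ℕ, 1 ≤ k → k ≤ n → G (p ^ k) = G p ^ k}, (w : ℕ∞)

/-- The transparency index `v_{p,G}`: least `K ≥ 0` with `G(p^{K+1}) ≠ 1`, or `⊤`. -/
noncomputable def trIdx (G : ℕ → ℂ) (p : ℕ) : ℕ∞ :=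
  ⨅ K ∈ {K : ℕ | G (p ^ (K + 1)) ≠ 1}, (K : ℕ∞)

/-- A prime `p` is bad for `G` iff `1 ≤ |G(p)| ≤ p`. -/
def IsBad (G : ℕ → ℂ) (p : ℕ) : Prop :=
  1 ≤ ‖G p‖ ∧ ‖G p‖ ≤ p

def IsHyperbad (G : ℕ → ℂ) (p : ℕ) : Prop :=
  p.Prime ∧ IsBad G p ∧ cmIndex G p = ⊤

def IsSimplyBad (G : ℕ → ℂ) (p : ℕ) : Prop :=
  p.Prime ∧ IsBad G p ∧ cmIndex G p ≠ ⊤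

def IsSimplyTransparent (G : ℕ → ℂ) (p : ℕ) : Prop :=
  p.Prime ∧ G p = 1 ∧ cmIndex G p ≠ ⊤

/-- The Ramanujan conductor `N(G) = ∏_{p simply bad} p^{w_{p,G}}`. -/
noncomputable def ramCond (G : ℕ → ℂ) : ℕ :=
  ∏ᶠ p ∈ {p : ℕ | IsSimplyBad G p}, p ^ (cmIndex G p).toNat

/-- The transparency conductor `N_T(G) = ∏_{p simply transparent} p^{v_{p,G}}`. -/
noncomputable def transpCond (G : ℕ → ℂ) : ℕ :=
  ∏ᶠ p ∈ {p : ℕ | IsSimplyTransparent G p}, p ^ (trIdx G p).toNat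

/-- The squarefree radical of `n`. -/
def rad (n : ℕ) : ℕ := ∏ p ∈ n.primeFactors, p

/-- Euler–Ramanujan factor `E_G(a) = ∑_{d ∣ a·rad a} G(d) c_d(a)`. -/
noncomputable def EG (G : ℕ → ℂ) (a : ℕ) : ℂ := ∑ d ∈ (a * rad a).divisors, G d * cR d a

/-- `C_G(a) = ∑_{d ∣ a} G(d) μ(d)`. -/
noncomputable def CGsum (G : ℕ → ℂ) (a : ℕ) : ℂ := ∑ d ∈ a.divisors, G d * mu d

/-- `D_G(a) = ∑_{d ∣ a} G(d) d`. -/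
noncomputable def DGsum (G : ℕ → ℂ) (a : ℕ) : ℂ := ∑ d ∈ a.divisors, G d * (d : ℂ)

/-- `U_G(a) = ∑_{d ∣ a} μ(d) G(da)`. -/
noncomputable def UGsum (G : ℕ → ℂ) (a : ℕ) : ℂ := ∑ d ∈ a.divisors, mu d * G (d * a)

/-- Eratosthenes transform `F' = F ∗ μ`. -/
noncomputable def eratos (F : ℕ → ℂ) (n : ℕ) : ℂ := ∑ d ∈ n.divisors, F d * mu (n / d)

/-- The canonical Ramanujan coefficient of `F`:
`G_F(q) = ∏_{p ∣ q} (1 - ∑_{K=0}^{v_p(q)-1} F'(p^K)/p^K)`. -/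
noncomputable def canonCoeff (F : ℕ → ℂ) (q : ℕ) : ℂ :=
  ∏ p ∈ q.primeFactors,
    (1 - ∑ K ∈ Finset.range (q.factorization p), eratos F (p ^ K) / ((p : ℂ) ^ K))

/-- The opacity core `H_G(q) = G(q·N_T(G))·μ(q)²`. -/
noncomputable def opacityCore (G : ℕ → ℂ) (q : ℕ) : ℂ :=
  G (q * transpCond G) * mu q ^ 2

section Chunk1
variable (G : ℕ → ℂ)

lemma mu_mul {a b : ℕ} (h : Nat.Coprime a b) : mu (a*b) = mu a * mu b := by
  unfold mu
  rw [ArithmeticFunction.isMultiplicative_moebius.map_mul_of_coprime h]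
  push_cast; ring

lemma mu_p_mul {p m : ℕ} (hp : p.Prime) (h : p ∣ m) : mu (p*m) = 0 := by
  unfold mu
  rw [ArithmeticFunction.moebius_eq_zero_of_not_squarefree]
  · simp
  · intro hsq
    have : p * p ∣ p * m := mul_dvd_mul_left p h
    exact hp.ne_one (Nat.isUnit_iff.mp (hsq p this))

lemma mu_prime {p : ℕ} (hp : p.Prime) : mu p = -1 := by
  unfold mu; rw [ArithmeticFunction.moebius_apply_prime hp]; push_cast; ring

/-- integer-level coprime-restricted Lucht partial sum -/
noncomputable def mdef (d c : ℕ) (n : ℕ) : ℂ :=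
  ∑ K ∈ (Finset.Icc 1 n).filter (fun K => Nat.Coprime K c), mu K * G (d * K)

def T0 (h : ℕ → ℂ) : Prop := Tendsto h atTop (nhds (0:ℂ))

lemma mdef_zero (d c : ℕ) : mdef G d c 0 = 0 := by
  simp [mdef]

lemma mdef_succ (d c n : ℕ) :
    mdef G d c (n+1) = mdef G d c n
      + (if Nat.Coprime (n+1) c then mu (n+1) * G (d*(n+1)) else 0) := by
  unfold mdef
  rw [show Finset.Icc 1 (n+1) = insert (n+1) (Finset.Icc 1 n) by
    ext k; simp [Nat.lt_succ_iff]; omega]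
  by_cases h : Nat.Coprime (n+1) c
  · rw [Finset.filter_insert, if_pos h, Finset.sum_insert (by simp)]
    rw [if_pos h]; ring
  · rw [Finset.filter_insert, if_neg h, if_neg h, add_zero]

/-- congruence in the coprimality parameter -/
lemma mdef_congr {c c' : ℕ} (h : ∀ K, Nat.Coprime K c ↔ Nat.Coprime K c') (d n : ℕ) :
    mdef G d c n = mdef G d c' n := by
  unfold mdef
  congr 1
  apply Finset.filter_congr
  intro K _
  simp [h K]

end Chunk1
section Chunk2
variable (G : ℕ → ℂ)

lemma coprime_mul_prime_iff {p : ℕ} (c : ℕ) (hp : p.Prime) (K : ℕ) :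
    Nat.Coprime K (c*p) ↔ Nat.Coprime K c ∧ ¬ p ∣ K := by
  rw [Nat.coprime_mul_iff_right]
  have : Nat.Coprime K p ↔ ¬ p ∣ K := by
    rw [Nat.coprime_comm]; exact hp.coprime_iff_not_dvd
  tauto

/-- Splitting off the prime `p` from the summation variable. -/
lemma mdef_split {p : ℕ} (hp : p.Prime) {c : ℕ} (hpc : ¬ p ∣ c) (d n : ℕ) :
    mdef G d c n = mdef G d (c*p) n - mdef G (d*p) (c*p) (n/p) := by
  have hcop : ∀ m : ℕ, Nat.Coprime (p*m) c ↔ Nat.Coprime m c := by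
    intro m
    rw [Nat.coprime_mul_iff_left]
    have : Nat.Coprime p c := hp.coprime_iff_not_dvd.mpr hpc
    tauto
  have key : mdef G d c n
      = mdef G d (c*p) n
        + ∑ m ∈ (Finset.Icc 1 (n/p)).filter (fun m => Nat.Coprime m c),
            mu (p*m) * G (d * (p*m)) := by
    unfold mdef
    rw [← Finset.sum_filter_add_sum_filter_not
      ((Finset.Icc 1 n).filter (fun K => Nat.Coprime K c)) (fun K => ¬ p ∣ K)]
    congr 1
    · rw [Finset.filter_filter]
      apply Finset.sum_congr _ (fun _ _ => rfl)
      apply Finset.filter_congr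
      intro K _
      simp only [coprime_mul_prime_iff c hp K, eq_iff_iff]
    · apply Finset.sum_nbij' (fun K => K / p) (fun m => p * m)
      · intro K hK
        simp only [Finset.mem_filter, Finset.mem_Icc, not_not] at hK ⊢
        obtain ⟨⟨⟨hK1, hKn⟩, hKc⟩, hpK⟩ := hK
        refine ⟨⟨(Nat.one_le_div_iff hp.pos).mpr (Nat.le_of_dvd (by omega) hpK),
          Nat.div_le_div_right hKn⟩, ?_⟩
        exact Nat.Coprime.coprime_dvd_left (Nat.div_dvd_of_dvd hpK) hKc
      · intro m hm
        simp only [Finset.mem_filter, Finset.mem_Icc, not_not] at hm ⊢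
        obtain ⟨⟨hm1, hmn⟩, hmc⟩ := hm
        refine ⟨⟨⟨le_trans hm1 (Nat.le_mul_of_pos_left m hp.pos), (Nat.le_div_iff_mul_le hp.pos).mp hmn |>.trans_eq' (mul_comm m p)⟩,
          (hcop m).mpr hmc⟩, ⟨m, rfl⟩⟩
      · intro K hK
        simp only [Finset.mem_filter, not_not] at hK
        exact Nat.mul_div_cancel' hK.2
      · intro m _
        exact Nat.mul_div_cancel_left m hp.pos
      · intro K hK
        simp only [Finset.mem_filter, not_not] at hK
        rw [Nat.mul_div_cancel' hK.2]
  rw [key]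
  have h3 : ∑ m ∈ (Finset.Icc 1 (n/p)).filter (fun m => Nat.Coprime m c),
      mu (p*m) * G (d * (p*m)) = - mdef G (d*p) (c*p) (n/p) := by
    unfold mdef
    rw [← Finset.sum_filter_add_sum_filter_not
      ((Finset.Icc 1 (n/p)).filter (fun m => Nat.Coprime m c)) (fun m => ¬ p ∣ m)]
    have hz : ∑ m ∈ ((Finset.Icc 1 (n/p)).filter (fun m => Nat.Coprime m c)).filter
        (fun m => ¬ ¬ p ∣ m), mu (p*m) * G (d * (p*m)) = 0 := by
      apply Finset.sum_eq_zero
      intro m hm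
      simp only [Finset.mem_filter, not_not] at hm
      rw [mu_p_mul hp hm.2, zero_mul]
    rw [hz, add_zero, Finset.filter_filter]
    rw [← Finset.sum_neg_distrib]
    apply Finset.sum_congr
    · apply Finset.filter_congr
      intro K _
      simp only [coprime_mul_prime_iff c hp K, eq_iff_iff]
    · intro m hm
      simp only [Finset.mem_filter] at hm
      have hpm : ¬ p ∣ m := ((coprime_mul_prime_iff c hp m).mp hm.2).2
      rw [mu_mul (hp.coprime_iff_not_dvd.mpr hpm), mu_prime hp]
      rw [show d * (p * m) = d * p * m by ring]
      ring
  rw [h3]; ring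
end Chunk2
section Chunk3
variable {G : ℕ → ℂ}

/-- Factoring a prime power out of the `d`-parameter when `p ∣ c`. -/
lemma mdef_factor (hG : IsMult G) {p : ℕ} (hp : p.Prime) {d c : ℕ} (hd : 0 < d)
    (hpd : ¬ p ∣ d) (hpc : p ∣ c) (j n : ℕ) :
    mdef G (d * p^j) c n = G (p^j) * mdef G d c n := by
  unfold mdef
  rw [Finset.mul_sum]
  apply Finset.sum_congr rfl
  intro K hK
  simp only [Finset.mem_filter, Finset.mem_Icc] at hK
  obtain ⟨⟨hK1, _⟩, hKc⟩ := hK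
  have hpK : ¬ p ∣ K :=
    hp.coprime_iff_not_dvd.mp (Nat.coprime_comm.mp (Nat.Coprime.coprime_dvd_right hpc hKc))
  have hcop : Nat.Coprime (p^j) (d*K) :=
    Nat.Coprime.pow_left j (Nat.Coprime.mul_right
      (hp.coprime_iff_not_dvd.mpr hpd) (hp.coprime_iff_not_dvd.mpr hpK))
  have : G (d * p^j * K) = G (p^j) * G (d*K) := by
    rw [show d * p^j * K = p^j * (d*K) by ring]
    exact hG _ _ (pow_pos hp.pos j) (by positivity) hcop
  rw [this]; ring

/-- CM-stripping: remove a prime power from `d` when `G` is CM at `p` up to level `j+1`. -/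
lemma mdef_strip (hG : IsMult G) {p : ℕ} (hp : p.Prime) {d c : ℕ} (hd : 0 < d)
    (hpd : ¬ p ∣ d) (hpc : ¬ p ∣ c) {j : ℕ} (hj : 1 ≤ j)
    (hcm : ∀ k, 1 ≤ k → k ≤ j+1 → G (p^k) = G p ^ k) (n : ℕ) :
    mdef G (d * p^j) c n = G p ^ j * mdef G d c n := by
  have hs1 := mdef_split G hp hpc (d*p^j) n
  have hs2 := mdef_split G hp hpc d n
  have hf1 := mdef_factor hG hp hd hpd (dvd_mul_left p c) j n
  have hf2 : mdef G (d * p^j * p) (c*p) (n/p) = G (p^(j+1)) * mdef G d (c*p) (n/p) := by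
    rw [show d * p^j * p = d * p^(j+1) by ring]
    exact mdef_factor hG hp hd hpd (dvd_mul_left p c) (j+1) (n/p)
  have hf3 : mdef G (d * p) (c*p) (n/p) = G (p^1) * mdef G d (c*p) (n/p) := by
    rw [show d * p = d * p^1 by ring]
    exact mdef_factor hG hp hd hpd (dvd_mul_left p c) 1 (n/p)
  rw [hs1, hf1, hf2, hs2, hf3, hcm j hj (by omega), hcm (j+1) (by omega) (by omega),
    hcm 1 (by omega) (by omega)]
  ring

lemma T0.sub {f g : ℕ → ℂ} (hf : T0 f) (hg : T0 g) : T0 (fun n => f n - g n) := by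
  have := Filter.Tendsto.sub hf hg
  simpa [T0] using this

lemma T0.const_mul {f : ℕ → ℂ} (a : ℂ) (hf : T0 f) : T0 (fun n => a * f n) := by
  have := Filter.Tendsto.const_mul a hf
  simpa [T0] using this

lemma T0.congr {f g : ℕ → ℂ} (h : ∀ n, f n = g n) (hf : T0 f) : T0 g := by
  unfold T0 at *
  exact hf.congr h

lemma tendsto_div_const_atTop {p : ℕ} (hp : 0 < p) :
    Tendsto (fun n : ℕ => n / p) atTop atTop := by
  apply Filter.tendsto_atTop_atTop.mpr
  intro b
  exact ⟨b * p, fun n hn => (Nat.le_div_iff_mul_le hp).mpr hn⟩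

lemma T0.comp_div {f : ℕ → ℂ} (hf : T0 f) {p : ℕ} (hp : 0 < p) :
    T0 (fun n => f (n / p)) :=
  hf.comp (tendsto_div_const_atTop hp)

lemma tendsto_mul_const_atTop {p : ℕ} (hp : 0 < p) :
    Tendsto (fun n : ℕ => p * n) atTop atTop := by
  apply Filter.tendsto_atTop_atTop.mpr
  intro b
  exact ⟨b, fun n hn => le_trans hn (Nat.le_mul_of_pos_left n hp)⟩

lemma T0.of_comp_div {f : ℕ → ℂ} {p : ℕ} (hp : 0 < p) (h : T0 (fun n => f (n / p))) :
    T0 f := by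
  have := h.comp (tendsto_mul_const_atTop hp)
  apply T0.congr _ (this : T0 _)
  intro n
  show f (p * n / p) = f n
  rw [Nat.mul_div_cancel_left n hp]

lemma exists_abs_bound {f : ℕ → ℂ} {L : ℂ} (h : Tendsto f atTop (nhds L)) :
    ∃ C : ℝ, 0 ≤ C ∧ ∀ n, ‖f n‖ ≤ C := by
  have hb : BddAbove (Set.range fun n => ‖f n‖) := (h.norm).bddAbove_range
  obtain ⟨C, hC⟩ := hb
  refine ⟨C, le_trans (norm_nonneg (f 0)) (hC ⟨0, rfl⟩), fun n => ?_⟩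
  exact hC ⟨n, rfl⟩

lemma T0.increments {f : ℕ → ℂ} (hf : T0 f) :
    Tendsto (fun n => f (n+1) - f n) atTop (nhds 0) := by
  have h1 : Tendsto (fun n => f (n+1)) atTop (nhds 0) :=
    hf.comp (tendsto_add_atTop_nat 1)
  simpa using h1.sub hf
end Chunk3
section Chunk4

lemma bounded_of_small {p : ℕ} (hp : 2 ≤ p) {c : ℂ} (hc : ‖c‖ < 1)
    {g : ℕ → ℂ} (hg0 : g 0 = 0) {C : ℝ} (hC0 : 0 ≤ C)
    (hC : ∀ n, ‖g n - c * g (n / p)‖ ≤ C) :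
    ∀ n, ‖g n‖ ≤ C / (1 - ‖c‖) := by
  intro n
  induction n using Nat.strong_induction_on with
  | _ n ih =>
    rcases Nat.eq_zero_or_pos n with rfl | hn
    · rw [hg0]
      simpa using div_nonneg hC0 (by linarith)
    · have hdiv : n / p < n := Nat.div_lt_self hn (by omega)
      have h1 : ‖g n‖ ≤ C + ‖c‖ * ‖g (n/p)‖ := by
        calc ‖g n‖ = ‖(g n - c * g (n/p)) + c * g (n/p)‖ := by ring_nf
        _ ≤ ‖g n - c * g (n/p)‖ + ‖c * g (n/p)‖ := norm_add_le _ _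
        _ ≤ C + ‖c‖ * ‖g (n/p)‖ := by rw [norm_mul]; gcongr; exact hC n
      have h2 := ih (n/p) hdiv
      have hlt : 0 < 1 - ‖c‖ := by linarith
      calc ‖g n‖ ≤ C + ‖c‖ * (C / (1 - ‖c‖)) := by
            refine h1.trans ?_; gcongr
      _ = C / (1 - ‖c‖) := by field_simp; ring

lemma linear_growth {g : ℕ → ℂ} (hg0 : g 0 = 0) {T : ℝ}
    (hT : ∀ n, ‖g (n+1) - g n‖ ≤ T) : ∀ n, ‖g n‖ ≤ T * n := by
  intro n
  induction n with
  | zero => simp [hg0]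
  | succ n ih =>
    push_cast
    calc ‖g (n+1)‖ = ‖(g (n+1) - g n) + g n‖ := by ring_nf
    _ ≤ ‖g (n+1) - g n‖ + ‖g n‖ := norm_add_le _ _
    _ ≤ T + T * n := add_le_add (hT n) ih
    _ = T * (n+1) := by push_cast; ring

lemma bounded_of_large {p : ℕ} (hp : 2 ≤ p) {c : ℂ} (hc : (p:ℝ) < ‖c‖)
    {g : ℕ → ℂ} (hg0 : g 0 = 0) {T : ℝ} (hT : ∀ n, ‖g (n+1) - g n‖ ≤ T)
    {C : ℝ} (hC : ∀ n, ‖g n - c * g (n / p)‖ ≤ C) :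
    ∀ n, ‖g n‖ ≤ C / (‖c‖ - 1) := by
  have hc1 : (1:ℝ) < ‖c‖ := lt_trans (by exact_mod_cast hp.trans_lt' one_lt_two) hc
  have hc0 : (0:ℝ) < ‖c‖ := by linarith
  have hT0 : 0 ≤ T := le_trans (norm_nonneg _) (hT 0)
  have hC0 : 0 ≤ C := le_trans (norm_nonneg _) (hC 0)
  have hlin := linear_growth hg0 hT
  set r : ℝ := (p:ℝ) / ‖c‖ with hr
  have hr0 : 0 ≤ r := by positivity
  have hr1 : r < 1 := (div_lt_one hc0).mpr hc
  have key : ∀ k n, ‖g n‖ ≤ T * n * r ^ k + C / (‖c‖ - 1) := by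
    intro k
    induction k with
    | zero =>
      intro n
      have hD : 0 ≤ C / (‖c‖ - 1) := div_nonneg hC0 (by linarith)
      simpa using le_trans (hlin n) (by linarith)
    | succ k ih =>
      intro n
      have hrec : ‖c‖ * ‖g n‖ ≤ ‖g (p*n)‖ + C := by
        have h1 : c * g n = g (p*n) - (g (p*n) - c * g ((p*n)/p)) := by
          rw [Nat.mul_div_cancel_left n (by omega : 0 < p)]; ring
        have h2 : ‖c * g n‖
            ≤ ‖g (p*n)‖ + ‖g (p*n) - c * g ((p*n)/p)‖ := by
          rw [h1]
          exact norm_sub_le _ _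
        rw [norm_mul] at h2
        exact h2.trans (by gcongr; exact hC (p*n))
      have h2 := ih (p*n)
      have : ‖c‖ * ‖g n‖ ≤ T * (p*n) * r^k + C / (‖c‖ - 1) + C := by
        push_cast at h2 ⊢; linarith
      have hgoal : ‖g n‖ ≤ (T * (p*n) * r^k + C / (‖c‖ - 1) + C) / ‖c‖ :=
        (le_div_iff₀ hc0).mpr (by linarith [this])
      refine hgoal.trans (le_of_eq ?_)
      have hne1 : ‖c‖ ≠ 0 := ne_of_gt hc0
      have hne2 : ‖c‖ - 1 ≠ 0 := by linarith
      rw [hr]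
      simp only [div_pow, pow_succ]
      field_simp
      ring
  intro n
  have hlim : Tendsto (fun k => T * n * r ^ k + C / (‖c‖ - 1)) atTop
      (nhds (C / (‖c‖ - 1))) := by
    have h0 : Tendsto (fun k:ℕ => r ^ k) atTop (nhds 0) :=
      tendsto_pow_atTop_nhds_zero_of_lt_one hr0 hr1
    have := (h0.const_mul (T * n)).add_const (C / (‖c‖ - 1))
    simpa using this
  exact ge_of_tendsto' hlim (fun k => key k n)

end Chunk4
section Chunk5

/-- If `g` is bounded, `|c| ≠ 1`, and `g n - c·g (n/p) → 0`, then `g → 0`. -/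
lemma tendsto_zero_of_rel {p : ℕ} (hp : 2 ≤ p) {c : ℂ} (hc1 : ‖c‖ ≠ 1)
    {g : ℕ → ℂ} {D : ℝ} (hD : ∀ n, ‖g n‖ ≤ D)
    (hf : Tendsto (fun n => g n - c * g (n/p)) atTop (nhds 0)) :
    Tendsto g atTop (nhds 0) := by
  set u : ℕ → ℝ := fun n => ‖g n‖ with hu
  have hu0 : ∀ n, 0 ≤ u n := fun n => norm_nonneg _
  have hbd : IsBoundedUnder (· ≤ ·) atTop u := Filter.isBoundedUnder_of ⟨D, hD⟩
  have hcobd : IsBoundedUnder (· ≥ ·) atTop u := Filter.isBoundedUnder_of ⟨0, hu0⟩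
  have hcob : IsCoboundedUnder (· ≤ ·) atTop u := hcobd.isCoboundedUnder_le
  set s := Filter.limsup u atTop with hs
  have hs0 : 0 ≤ s := by
    apply Filter.le_limsup_of_frequently_le _ hbd
    exact Filter.Frequently.of_forall hu0
  have habs : Tendsto (fun n => ‖g n - c * g (n/p)‖) atTop (nhds 0) := by
    have := hf.norm
    simpa using this
  -- main: s = 0
  have hszero : s = 0 := by
    rcases lt_or_gt_of_ne hc1 with hlt | hgt
    · -- |c| < 1 : use u n ≤ |f n| + |c| * u (n/p)
      have key : ∀ ε > (0:ℝ), s ≤ ε + ‖c‖ * (s + ε) := by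
        intro ε hε
        have h1 : ∀ᶠ n in atTop, ‖g n - c * g (n/p)‖ < ε :=
          (habs.eventually (eventually_lt_nhds hε)).mono (by simp)
        have h2 : ∀ᶠ n : ℕ in atTop, u n < s + ε := by
          apply Filter.eventually_lt_of_limsup_lt _ hbd
          linarith
        obtain ⟨N, hN⟩ := Filter.eventually_atTop.mp h2
        have h3 : ∀ᶠ n : ℕ in atTop, u (n/p) < s + ε := by
          rw [Filter.eventually_atTop]
          exact ⟨N * p, fun n hn => hN _ ((Nat.le_div_iff_mul_le (by omega)).mpr hn)⟩
        have h4 : ∀ᶠ n : ℕ in atTop, u n ≤ ε + ‖c‖ * (s + ε) := by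
          filter_upwards [h1, h3] with n hn1 hn3
          have : u n ≤ ‖g n - c * g (n/p)‖ + ‖c‖ * u (n/p) := by
            rw [hu]
            calc ‖g n‖
                = ‖(g n - c * g (n/p)) + c * g (n/p)‖ := by ring_nf
            _ ≤ ‖g n - c * g (n/p)‖ + ‖c * g (n/p)‖ :=
                norm_add_le _ _
            _ = ‖g n - c * g (n/p)‖ + ‖c‖ * ‖g (n/p)‖ := by
                rw [norm_mul]
          have hc0 : 0 ≤ ‖c‖ := norm_nonneg c
          nlinarith [this, hn1, hn3, le_of_lt hn3]
        exact Filter.limsup_le_of_le hcob h4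
      -- conclude s ≤ |c| s, so s = 0
      have : ∀ ε > (0:ℝ), s ≤ ‖c‖ * s + ε * (1 + ‖c‖) := by
        intro ε hε
        have := key ε hε
        nlinarith [norm_nonneg c]
      have hle : s ≤ ‖c‖ * s := by
        by_contra hcon
        push_neg at hcon
        set δ := (s - ‖c‖ * s) / (2 * (1 + ‖c‖)) with hδ
        have hpos : 0 < 1 + ‖c‖ := by nlinarith [norm_nonneg c]
        have hδpos : 0 < δ := by apply div_pos <;> nlinarith
        have h6 := this δ hδpos
        rw [hδ] at h6
        have h7 : (s - ‖c‖ * s) / (2 * (1 + ‖c‖)) * (1 + ‖c‖)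
            = (s - ‖c‖ * s) / 2 := by field_simp
        rw [h7] at h6
        linarith
      nlinarith [norm_nonneg c, hs0, hlt]
    · -- |c| > 1 : use |c| * u n ≤ u (p*n) + |f (p*n)|
      have key : ∀ ε > (0:ℝ), ‖c‖ * s ≤ s + 2*ε := by
        intro ε hε
        have h1 : ∀ᶠ n in atTop, ‖g n - c * g (n/p)‖ < ε :=
          (habs.eventually (eventually_lt_nhds hε)).mono (by simp)
        have h2 : ∀ᶠ n : ℕ in atTop, u n < s + ε := by
          apply Filter.eventually_lt_of_limsup_lt _ hbd
          linarith
        obtain ⟨N1, hN1⟩ := Filter.eventually_atTop.mp h1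
        obtain ⟨N2, hN2⟩ := Filter.eventually_atTop.mp h2
        have h4 : ∀ᶠ n : ℕ in atTop, ‖c‖ * u n ≤ (s + ε) + ε := by
          rw [Filter.eventually_atTop]
          refine ⟨N1 + N2, fun n hn => ?_⟩
          have hpn1 : N1 ≤ p * n := le_trans (by omega) (Nat.le_mul_of_pos_left n (by omega))
          have hpn2 : N2 ≤ p * n := le_trans (by omega) (Nat.le_mul_of_pos_left n (by omega))
          have hh1 := hN1 _ hpn1
          have hh2 := hN2 _ hpn2
          have hdiv : (p*n)/p = n := Nat.mul_div_cancel_left n (by omega)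
          have hcalc : ‖c * g n‖
              ≤ ‖g (p*n)‖ + ‖g (p*n) - c * g ((p*n)/p)‖ := by
            rw [show c * g n = g (p*n) - (g (p*n) - c * g ((p*n)/p)) by rw [hdiv]; ring]
            exact norm_sub_le _ _
          rw [norm_mul] at hcalc
          have := hh1
          rw [hdiv] at hh1
          calc ‖c‖ * u n ≤ ‖g (p*n)‖ + ‖g (p*n) - c * g n‖ := by
                rw [hu]; simpa [hdiv] using hcalc
          _ ≤ (s + ε) + ε := by
              have := hN2 _ hpn2
              have h5 := hN1 _ hpn1
              rw [hdiv] at h5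
              exact add_le_add (le_of_lt this) (le_of_lt h5)
        -- limsup of |c| * u  is |c| * s ... avoid: divide instead
        have hc0 : 0 < ‖c‖ := by linarith
        have h5 : ∀ᶠ n : ℕ in atTop, u n ≤ (s + 2*ε) / ‖c‖ := by
          filter_upwards [h4] with n hn
          rw [le_div_iff₀ hc0]
          linarith [hn]
        have h6 : s ≤ (s + 2*ε) / ‖c‖ := Filter.limsup_le_of_le hcob h5
        calc ‖c‖ * s ≤ ‖c‖ * ((s + 2*ε) / ‖c‖) := by
              gcongr
        _ = s + 2*ε := by field_simp
      have hle : ‖c‖ * s ≤ s := by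
        by_contra hcon
        push_neg at hcon
        have := key ((‖c‖ * s - s)/4) (by linarith)
        linarith
      nlinarith [hs0, hgt]
  -- finish: u → 0 hence g → 0
  have hu_to : Tendsto u atTop (nhds 0) := by
    refine Metric.tendsto_atTop.mpr (fun ε hε => ?_)
    have h2 : ∀ᶠ n : ℕ in atTop, u n < ε := by
      apply Filter.eventually_lt_of_limsup_lt _ hbd
      rw [← hs, hszero]; exact hε
    obtain ⟨N, hN⟩ := Filter.eventually_atTop.mp h2
    refine ⟨N, fun n hn => ?_⟩
    rw [Real.dist_eq, sub_zero, abs_of_nonneg (hu0 n)]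
    exact hN n hn
  have : Tendsto (fun n => ‖g n‖) atTop (nhds 0) := by
    simpa using hu_to
  exact tendsto_zero_iff_norm_tendsto_zero.mpr this

end Chunk5
section Chunk6
variable {G : ℕ → ℂ}

lemma one_mul_pow_fix (p : ℕ) : 1 * p = 1 * p^1 := by ring

lemma mdef_rel_one (hG : IsMult G) {p : ℕ} (hp : p.Prime) {c : ℕ} (hpc : ¬ p ∣ c) (n : ℕ) :
    mdef G 1 c n = mdef G 1 (c*p) n - G p * mdef G 1 (c*p) (n/p) := by
  have h1 := mdef_split G hp hpc 1 n
  have h2 : mdef G (1*p) (c*p) (n/p) = G p * mdef G 1 (c*p) (n/p) := by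
    rw [one_mul_pow_fix p, mdef_factor hG hp (by omega) (by simpa using hp.one_lt.ne')
      (dvd_mul_left p c) 1 (n/p), pow_one]
  rw [h1, h2]

lemma step_down (hG : IsMult G) {p : ℕ} (hp : p.Prime) {c : ℕ} (hpc : ¬ p ∣ c)
    (h : T0 (mdef G 1 (c*p))) : T0 (mdef G 1 c) := by
  have := h.sub (T0.const_mul (G p) (h.comp_div hp.pos))
  exact T0.congr (fun n => (mdef_rel_one hG hp hpc n).symm) this

lemma step_up (hG : IsMult G) {p : ℕ} (hp : p.Prime)
    (hgood : ‖G p‖ < 1 ∨ (p:ℝ) < ‖G p‖)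
    {c : ℕ} (hpc : ¬ p ∣ c) (h : T0 (mdef G 1 c)) : T0 (mdef G 1 (c*p)) := by
  set g := mdef G 1 (c*p) with hg
  have hrel : ∀ n, mdef G 1 c n = g n - G p * g (n/p) := mdef_rel_one hG hp hpc
  have hf : Tendsto (fun n => g n - G p * g (n/p)) atTop (nhds 0) :=
    T0.congr hrel h
  have hg0 : g 0 = 0 := mdef_zero G 1 (c*p)
  have habs1 : ‖G p‖ ≠ 1 := by
    rcases hgood with h1 | h1
    · exact ne_of_lt h1
    · refine ne_of_gt (lt_trans ?_ h1)
      exact_mod_cast hp.one_lt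
  obtain ⟨C, hC0, hC⟩ := exists_abs_bound (h : Tendsto _ _ _)
  have hC' : ∀ n, ‖g n - G p * g (n/p)‖ ≤ C := by
    intro n; rw [← hrel n]; exact hC n
  have hD : ∃ D, ∀ n, ‖g n‖ ≤ D := by
    rcases hgood with h1 | h1
    · exact ⟨_, bounded_of_small hp.two_le h1 hg0 hC0 hC'⟩
    · -- increments of g are bounded
      obtain ⟨T, hT0, hT⟩ := exists_abs_bound (T0.increments h)
      have hTg : ∀ n, ‖g (n+1) - g n‖ ≤ T := by
        intro n
        have hgsucc := mdef_succ G 1 (c*p) n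
        have hfsucc := mdef_succ G 1 c n
        by_cases hco : Nat.Coprime (n+1) (c*p)
        · have hco' : Nat.Coprime (n+1) c := Nat.Coprime.coprime_dvd_right (dvd_mul_right c p) hco
          have : g (n+1) - g n = mdef G 1 c (n+1) - mdef G 1 c n := by
            rw [hg] at *
            rw [hgsucc, if_pos hco, hfsucc, if_pos hco']
            ring
          rw [this]; exact hT n
        · have : g (n+1) - g n = 0 := by
            rw [hg] at *
            rw [hgsucc, if_neg hco]; ring
          rw [this]; simpa using hT0
      exact ⟨_, bounded_of_large hp.two_le h1 hg0 hTg hC'⟩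
  obtain ⟨D, hD⟩ := hD
  exact tendsto_zero_of_rel hp.two_le habs1 hD hf

end Chunk6
section Chunk7
variable {G : ℕ → ℂ} {p : ℕ}

lemma cm_mem_one : 1 ∈ {n : ℕ | ∀ k : ℕ, 1 ≤ k → k ≤ n → G (p ^ k) = G p ^ k} := by
  intro k h1 h2
  have : k = 1 := le_antisymm h2 h1
  subst this
  rw [pow_one, pow_one]

lemma one_le_cmIndex : (1:ℕ∞) ≤ cmIndex G p := by
  have := le_biSup (fun w : ℕ => (w:ℕ∞)) (cm_mem_one (G := G) (p := p))
  simpa [cmIndex] using this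

lemma cm_of_le {j : ℕ} (h : (j:ℕ∞) ≤ cmIndex G p) :
    ∀ k, 1 ≤ k → k ≤ j → G (p^k) = G p ^ k := by
  by_cases hj : j ∈ {n : ℕ | ∀ k : ℕ, 1 ≤ k → k ≤ n → G (p ^ k) = G p ^ k}
  · exact hj
  · exfalso
    rcases Nat.eq_zero_or_pos j with rfl | hj0
    · exact hj (by intro k h1 h2; omega)
    · have hb : ∀ w ∈ {n : ℕ | ∀ k : ℕ, 1 ≤ k → k ≤ n → G (p ^ k) = G p ^ k},
          (w:ℕ∞) ≤ ((j-1 : ℕ) : ℕ∞) := by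
        intro w hw
        have : w ≤ j - 1 := by
          by_contra hcon
          push_neg at hcon
          exact hj (fun k h1 h2 => hw k h1 (by omega))
        exact_mod_cast this
      have : cmIndex G p ≤ ((j-1:ℕ) : ℕ∞) := by
        rw [cmIndex]
        exact iSup₂_le hb
      have hle := le_trans h this
      have : j ≤ j - 1 := by exact_mod_cast hle
      omega

lemma cm_toNat_mem (h : cmIndex G p ≠ ⊤) :
    (∀ k, 1 ≤ k → k ≤ (cmIndex G p).toNat → G (p^k) = G p ^ k) := by
  apply cm_of_le
  rw [ENat.coe_toNat h]

lemma cm_succ_ne (h : cmIndex G p ≠ ⊤) :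
    G (p^((cmIndex G p).toNat + 1)) ≠ G p ^ ((cmIndex G p).toNat + 1) := by
  set m := (cmIndex G p).toNat with hm
  intro heq
  have hmem : (m+1) ∈ {n : ℕ | ∀ k : ℕ, 1 ≤ k → k ≤ n → G (p ^ k) = G p ^ k} := by
    intro k h1 h2
    rcases Nat.lt_or_ge k (m+1) with hk | hk
    · exact cm_toNat_mem h k h1 (by omega)
    · have : k = m + 1 := by omega
      subst this; exact heq
  have := le_biSup (fun w : ℕ => (w:ℕ∞)) hmem
  have hle : ((m+1:ℕ) : ℕ∞) ≤ cmIndex G p := by simpa [cmIndex] using this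
  rw [← ENat.coe_toNat h, ← hm] at hle
  have : m + 1 ≤ m := by exact_mod_cast hle
  omega

lemma one_le_cm_toNat (h : cmIndex G p ≠ ⊤) : 1 ≤ (cmIndex G p).toNat := by
  have h1 := one_le_cmIndex (G := G) (p := p)
  rcases Nat.eq_zero_or_pos (cmIndex G p).toNat with h0 | h2
  · exfalso
    have := ENat.coe_toNat h
    rw [h0] at this
    rw [← this] at h1
    simpa using h1
  · exact h2

lemma cm_of_top (h : cmIndex G p = ⊤) : ∀ k, 1 ≤ k → G (p^k) = G p ^ k := by
  intro k h1
  apply cm_of_le (j := k) _ k h1 (le_refl k)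
  rw [h]; exact le_top

end Chunk7
section Chunk8
variable {G : ℕ → ℂ}

lemma prime_not_dvd_prod {q : ℕ} (hq : q.Prime) {P : Finset ℕ}
    (hall : ∀ r ∈ P, r.Prime) (hqP : q ∉ P) : ¬ q ∣ ∏ r ∈ P, r := by
  intro h
  obtain ⟨r, hr, hqr⟩ := (Nat.Prime.prime hq).exists_mem_finset_dvd h
  exact hqP ((Nat.prime_dvd_prime_iff_eq hq (hall r hr)).mp hqr ▸ hr)

lemma prod_primes_pos {P : Finset ℕ} (hall : ∀ r ∈ P, r.Prime) : 0 < ∏ r ∈ P, r := by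
  apply Finset.prod_pos
  intro r hr
  exact (hall r hr).pos

/-- Forward engine: from `L_d → 0` for all `d`, deduce coprime sums over
products of primes with finite cm-index tend to `0`. -/
lemma forward_engine (hG : IsMult G) (hL : ∀ d, 0 < d → T0 (mdef G d 1))
    (P : Finset ℕ) (hall : ∀ q ∈ P, q.Prime ∧ cmIndex G q ≠ ⊤) :
    ∀ d, 0 < d → Nat.Coprime d (∏ q ∈ P, q) → T0 (mdef G d (∏ q ∈ P, q)) := by
  induction P using Finset.induction_on with
  | empty =>
    intro d hd _
    simp only [Finset.prod_empty]
    exact hL d hd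
  | @insert q P hqP ih =>
    intro d hd hcop
    have hq : q.Prime := (hall q (Finset.mem_insert_self q P)).1
    have hqtop : cmIndex G q ≠ ⊤ := (hall q (Finset.mem_insert_self q P)).2
    have hallP : ∀ r ∈ P, r.Prime ∧ cmIndex G r ≠ ⊤ :=
      fun r hr => hall r (Finset.mem_insert_of_mem hr)
    set Q := ∏ r ∈ P, r with hQ
    have hprod : ∏ r ∈ insert q P, r = q * Q := Finset.prod_insert hqP
    rw [hprod] at hcop ⊢
    have hQpos : 0 < Q := prod_primes_pos (fun r hr => (hallP r hr).1)
    have hqQ : ¬ q ∣ Q := prime_not_dvd_prod hq (fun r hr => (hallP r hr).1) hqP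
    have hdq : Nat.Coprime d q := Nat.Coprime.coprime_dvd_right (dvd_mul_right q Q) hcop
    have hdQ : Nat.Coprime d Q := Nat.Coprime.coprime_dvd_right (dvd_mul_left Q q) hcop
    have hqd : ¬ q ∣ d := hq.coprime_iff_not_dvd.mp (Nat.coprime_comm.mp hdq)
    set w := (cmIndex G q).toNat with hw
    have hw1 : 1 ≤ w := one_le_cm_toNat hqtop
    set g := mdef G d (Q*q) with hg
    -- identities
    have hI0 : ∀ n, mdef G d Q n = g n - G q * g (n/q) := by
      intro n
      have h1 := mdef_split G hq hqQ d n
      have h2 : mdef G (d*q) (Q*q) (n/q) = G q * g (n/q) := by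
        rw [show d * q = d * q^1 by ring,
          mdef_factor hG hq hd hqd (dvd_mul_left q Q) 1 (n/q), pow_one]
      rw [h1, h2]
    have hIw : ∀ n, mdef G (d*q^w) Q n = G (q^w) * g n - G (q^(w+1)) * g (n/q) := by
      intro n
      have h1 := mdef_split G hq hqQ (d*q^w) n
      have h2 : mdef G (d*q^w) (Q*q) n = G (q^w) * g n :=
        mdef_factor hG hq hd hqd (dvd_mul_left q Q) w n
      have h3 : mdef G (d*q^w*q) (Q*q) (n/q) = G (q^(w+1)) * g (n/q) := by
        rw [show d * q^w * q = d * q^(w+1) by ring]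
        exact mdef_factor hG hq hd hqd (dvd_mul_left q Q) (w+1) (n/q)
      rw [h1, h2, h3]
    have hA0 : T0 (mdef G d Q) := ih hallP d hd hdQ
    have hAw : T0 (mdef G (d*q^w) Q) := by
      apply ih hallP (d*q^w) (Nat.mul_pos hd (Nat.pow_pos hq.pos))
      exact Nat.Coprime.mul
        (k := Q) hdQ (Nat.Coprime.pow_left w (hq.coprime_iff_not_dvd.mpr hqQ))
    -- combo
    have hcm : G (q^w) = G q ^ w := cm_toNat_mem hqtop w hw1 (le_refl w)
    have hkey : ∀ n, (G (q^(w+1)) - G q ^ (w+1)) * g (n/q)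
        = G q ^ w * mdef G d Q n - mdef G (d*q^w) Q n := by
      intro n
      rw [hI0 n, hIw n, hcm]
      ring
    have hT : T0 (fun n => (G (q^(w+1)) - G q ^ (w+1)) * g (n/q)) := by
      apply T0.congr (fun n => (hkey n).symm)
      exact (T0.const_mul _ hA0).sub hAw
    have hne : G (q^(w+1)) - G q ^ (w+1) ≠ 0 := sub_ne_zero.mpr (cm_succ_ne hqtop)
    have hgq : T0 (fun n => g (n/q)) := by
      have := T0.const_mul (G (q^(w+1)) - G q ^ (w+1))⁻¹ hT
      apply T0.congr _ this
      intro n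
      rw [← mul_assoc, inv_mul_cancel₀ hne, one_mul]
    have : T0 g := T0.of_comp_div hq.pos hgq
    rw [show q * Q = Q * q from mul_comm q Q]
    exact this

end Chunk8
section Chunk9
variable {G : ℕ → ℂ}

lemma remove_engine (hG : IsMult G) (T : Finset ℕ) (hT : ∀ q ∈ T, q.Prime)
    (h : T0 (mdef G 1 (∏ q ∈ T, q))) :
    ∀ S ⊆ T, T0 (mdef G 1 (∏ q ∈ S, q)) := by
  suffices H : ∀ V : Finset ℕ, V ⊆ T → T0 (mdef G 1 (∏ q ∈ T \ V, q)) by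
    intro S hS
    have := H (T \ S) (Finset.sdiff_subset)
    rwa [_root_.sdiff_sdiff_eq_self hS] at this
  intro V
  induction V using Finset.induction_on with
  | empty => intro _; simpa using h
  | @insert r V hrV ih =>
    intro hsub
    have hr : r ∈ T := hsub (Finset.mem_insert_self r V)
    have hrprime : r.Prime := hT r hr
    have hVT : V ⊆ T := fun x hx => hsub (Finset.mem_insert_of_mem hx)
    by_cases hrTV : r ∈ T \ V
    · have hset : T \ V = insert r (T \ insert r V) := by
        ext x
        simp only [Finset.mem_sdiff, Finset.mem_insert]
        constructor
        · rintro ⟨hxT, hxV⟩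
          by_cases hxr : x = r
          · left; exact hxr
          · right; exact ⟨hxT, by simp [hxV, hxr]⟩
        · rintro (rfl | ⟨hxT, hx⟩)
          · simpa using hrTV
          · exact ⟨hxT, fun hxV => hx (Or.inr hxV)⟩
      have hrnot : r ∉ T \ insert r V := by simp
      have hprod : ∏ q ∈ T \ V, q = r * ∏ q ∈ T \ insert r V, q := by
        rw [hset, Finset.prod_insert hrnot]
      have hIH := ih hVT
      rw [hprod] at hIH
      have hrdvd : ¬ r ∣ ∏ q ∈ T \ insert r V, q :=
        prime_not_dvd_prod hrprime (fun x hx => hT x (Finset.mem_sdiff.mp hx).1) hrnot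
      apply step_down hG hrprime hrdvd
      rwa [show (∏ q ∈ T \ insert r V, q) * r = r * ∏ q ∈ T \ insert r V, q from
        mul_comm _ _]
    · have hset : T \ insert r V = T \ V := by
        ext x
        simp only [Finset.mem_sdiff, Finset.mem_insert] at *
        constructor
        · rintro ⟨hxT, hx⟩; exact ⟨hxT, fun h2 => hx (Or.inr h2)⟩
        · rintro ⟨hxT, hx⟩
          refine ⟨hxT, ?_⟩
          rintro (rfl | h2)
          · exact hrTV ⟨hr, hx⟩
          · exact hx h2
      rw [hset]
      exact ih hVT

lemma add_engine (hG : IsMult G) {c0 : ℕ} (hc0 : 0 < c0)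
    (V : Finset ℕ)
    (hV : ∀ r ∈ V, r.Prime ∧ (‖G r‖ < 1 ∨ (r:ℝ) < ‖G r‖) ∧ ¬ r ∣ c0)
    (h : T0 (mdef G 1 c0)) : T0 (mdef G 1 (c0 * ∏ r ∈ V, r)) := by
  induction V using Finset.induction_on with
  | empty => simpa using h
  | @insert r V hrV ih =>
    have hr := hV r (Finset.mem_insert_self r V)
    have hVr : ∀ x ∈ V, x.Prime ∧ (‖G x‖ < 1 ∨ (x:ℝ) < ‖G x‖) ∧ ¬ x ∣ c0 :=
      fun x hx => hV x (Finset.mem_insert_of_mem hx)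
    have hIH := ih hVr
    have hnd : ¬ r ∣ c0 * ∏ x ∈ V, x := by
      rw [hr.1.dvd_mul]
      push_neg
      exact ⟨hr.2.2, prime_not_dvd_prod hr.1 (fun x hx => (hVr x hx).1) hrV⟩
    have := step_up hG hr.1 hr.2.1 hnd hIH
    apply T0.congr _ this
    intro n
    congr 1
    rw [Finset.prod_insert hrV]
    ring

lemma back1 (hG : IsMult G) (T : Finset ℕ) (hT : ∀ q ∈ T, q.Prime)
    (hbase : T0 (mdef G 1 (∏ q ∈ T, q))) :
    ∀ c : Finset ℕ, (∀ r ∈ c, r.Prime ∧ (r ∈ T ∨ ¬ IsBad G r)) →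
      T0 (mdef G 1 (∏ r ∈ c, r)) := by
  intro c hc
  set S := c ∩ T with hS
  set V := c \ T with hV
  have hprod : (∏ r ∈ S, r) * ∏ r ∈ V, r = ∏ r ∈ c, r :=
    Finset.prod_inter_mul_prod_diff c T _
  have hSsub : S ⊆ T := Finset.inter_subset_right
  have hS0 : T0 (mdef G 1 (∏ r ∈ S, r)) := remove_engine hG T hT hbase S hSsub
  have hSpos : 0 < ∏ r ∈ S, r :=
    prod_primes_pos (fun r hr => (hc r (Finset.mem_of_mem_inter_left hr)).1)
  have hgood : ∀ r ∈ V, r.Prime ∧ (‖G r‖ < 1 ∨ (r:ℝ) < ‖G r‖)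
      ∧ ¬ r ∣ ∏ q ∈ S, q := by
    intro r hr
    obtain ⟨hrc, hrT⟩ := Finset.mem_sdiff.mp hr
    have hrprime := (hc r hrc).1
    have hrgood : ¬ IsBad G r := by
      rcases (hc r hrc).2 with h1 | h1
      · exact absurd h1 hrT
      · exact h1
    have : ‖G r‖ < 1 ∨ (r:ℝ) < ‖G r‖ := by
      rw [IsBad, not_and_or] at hrgood
      rcases hrgood with h1 | h1
      · left; linarith [not_le.mp h1]
      · right; linarith [not_le.mp h1]
    refine ⟨hrprime, this, ?_⟩
    apply prime_not_dvd_prod hrprime (fun x hx => (hc x (Finset.mem_of_mem_inter_left hx)).1)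
    intro hrS
    exact hrT (hSsub hrS)
  have := add_engine hG hSpos V hgood hS0
  apply T0.congr _ this
  intro n
  rw [hprod]

end Chunk9
section Chunk10
variable {G : ℕ → ℂ}

def OkPrime (G : ℕ → ℂ) (r : ℕ) : Prop := r.Prime ∧ (IsSimplyBad G r ∨ ¬ IsBad G r)

lemma back2 (hG : IsMult G)
    (hstep1 : ∀ c : Finset ℕ, (∀ r ∈ c, OkPrime G r) → T0 (mdef G 1 (∏ r ∈ c, r))) :
    ∀ d, 0 < d → ∀ c : Finset ℕ, (∀ r ∈ c, OkPrime G r) →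
      Nat.Coprime d (∏ r ∈ c, r) → T0 (mdef G d (∏ r ∈ c, r)) := by
  intro d
  induction d using Nat.strong_induction_on with
  | _ d IH =>
    intro hd c hc hcop
    rcases eq_or_lt_of_le (Nat.one_le_iff_ne_zero.mpr (Nat.pos_iff_ne_zero.mp hd)) with h1 | h2
    · rw [← h1]
      exact hstep1 c hc
    · -- d ≥ 2
      set p := d.minFac with hpdef
      have hp : p.Prime := Nat.minFac_prime (by omega)
      have hpd : p ∣ d := Nat.minFac_dvd d
      set j := d.factorization p with hj
      have hj1 : 1 ≤ j := by
        rw [hj]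
        exact (Nat.Prime.factorization_pos_of_dvd hp (by omega) hpd)
      set d' := d / p ^ j with hd'
      have hdd : p ^ j * d' = d := Nat.ordProj_mul_ordCompl_eq_self d p
      have hpd' : ¬ p ∣ d' := Nat.not_dvd_ordCompl hp (by omega)
      have hd'pos : 0 < d' := Nat.ordCompl_pos p (by omega)
      have hd'lt : d' < d := by
        rw [hd']
        apply Nat.div_lt_self hd
        exact Nat.one_lt_pow (by omega) hp.one_lt
      have hd'dvd : d' ∣ d := Nat.ordCompl_dvd d p
      have hd'cop : Nat.Coprime d' (∏ r ∈ c, r) := Nat.Coprime.coprime_dvd_left hd'dvd hcop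
      have hpc : ¬ p ∣ ∏ r ∈ c, r :=
        hp.coprime_iff_not_dvd.mp (Nat.Coprime.coprime_dvd_left hpd hcop)
      by_cases hcase : ∀ k, 1 ≤ k → k ≤ j+1 → G (p^k) = G p ^ k
      · -- strip
        have hstrip := mdef_strip hG hp hd'pos hpd' hpc hj1 hcase
        have hIH := IH d' hd'lt hd'pos c hc hd'cop
        have := T0.const_mul (G p ^ j) hIH
        apply T0.congr _ this
        intro n
        rw [← hstrip n, show d' * p ^ j = d by rw [mul_comm]; exact hdd]
      · -- p has finite cm-index and is Ok
        have hptop : cmIndex G p ≠ ⊤ := by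
          intro htop
          exact hcase (fun k h1 _ => cm_of_top htop k h1)
        have hpok : OkPrime G p := by
          refine ⟨hp, ?_⟩
          by_cases hbad : IsBad G p
          · exact Or.inl ⟨hp, hbad, hptop⟩
          · exact Or.inr hbad
        have hpnotc : p ∉ c := fun hmem => hpc (Finset.dvd_prod_of_mem _ hmem)
        set c' := insert p c with hc'
        have hc'ok : ∀ r ∈ c', OkPrime G r := by
          intro r hr
          rcases Finset.mem_insert.mp hr with rfl | hr2
          · exact hpok
          · exact hc r hr2
        have hc'prod : ∏ r ∈ c', r = p * ∏ r ∈ c, r := Finset.prod_insert hpnotc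
        have hd'copc' : Nat.Coprime d' (∏ r ∈ c', r) := by
          rw [hc'prod]
          exact Nat.Coprime.mul_right
            (Nat.coprime_comm.mp (hp.coprime_iff_not_dvd.mpr hpd')) hd'cop
        have hIH := IH d' hd'lt hd'pos c' hc'ok hd'copc'
        set h : ℕ → ℂ := mdef G d' ((∏ r ∈ c, r) * p) with hh
        have hIH2 : T0 h := by
          apply T0.congr _ hIH
          intro n
          rw [hh, hc'prod, mul_comm p]
        have hid : ∀ n, mdef G d (∏ r ∈ c, r) n = G (p^j) * h n - G (p^(j+1)) * h (n/p) := by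
          intro n
          have h1 : mdef G d (∏ r ∈ c, r) n = mdef G (d' * p^j) (∏ r ∈ c, r) n := by
            rw [show d' * p ^ j = d by rw [mul_comm]; exact hdd]
          have h2 := mdef_split G hp hpc (d' * p^j) n
          have h3 : mdef G (d' * p^j) ((∏ r ∈ c, r) * p) n = G (p^j) * h n :=
            mdef_factor hG hp hd'pos hpd' (dvd_mul_left p _) j n
          have h4 : mdef G (d' * p^j * p) ((∏ r ∈ c, r) * p) (n/p) = G (p^(j+1)) * h (n/p) := by
            rw [show d' * p^j * p = d' * p^(j+1) by ring]
            exact mdef_factor hG hp hd'pos hpd' (dvd_mul_left p _) (j+1) (n/p)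
          rw [h1, h2, h3, h4]
        have := (T0.const_mul (G (p^j)) hIH2).sub
          (T0.const_mul (G (p^(j+1))) (hIH2.comp_div hp.pos))
        apply T0.congr _ this
        intro n
        exact (hid n).symm

end Chunk10
section Chunk11
variable (G : ℕ → ℂ)

lemma mdef_one_c (d m : ℕ) : mdef G d 1 m = ∑ K ∈ Finset.Icc 1 m, mu K * G (d*K) := by
  unfold mdef
  rw [Finset.filter_true_of_mem]
  intro K _
  exact Nat.coprime_one_right K

lemma rsd_eq {a : ℕ} (ha : 0 < a) (n : ℕ) :
    ∑ q ∈ Finset.Icc 1 n, G q * cR q a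
      = ∑ e ∈ a.divisors, (e:ℂ) * mdef G e 1 (n/e) := by
  have hrhs : ∀ e ∈ a.divisors, (e:ℂ) * mdef G e 1 (n/e)
      = ∑ K ∈ Finset.Icc 1 (n/e), (e:ℂ) * (mu K * G (e*K)) := by
    intro e _
    rw [mdef_one_c, Finset.mul_sum]
  rw [Finset.sum_congr rfl hrhs]
  unfold cR
  have hlhs : ∀ q ∈ Finset.Icc 1 n, G q * ∑ e ∈ (Nat.gcd q a).divisors, (e:ℂ) * mu (q/e)
      = ∑ e ∈ (Nat.gcd q a).divisors, G q * ((e:ℂ) * mu (q/e)) := by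
    intro q _
    rw [Finset.mul_sum]
  rw [Finset.sum_congr rfl hlhs, Finset.sum_sigma', Finset.sum_sigma']
  apply Finset.sum_nbij' (fun x => (⟨x.2, x.1 / x.2⟩ : Σ _ : ℕ, ℕ))
    (fun y => (⟨y.1 * y.2, y.1⟩ : Σ _ : ℕ, ℕ))
  · rintro ⟨q, e⟩ hx
    simp only [Finset.mem_sigma, Finset.mem_Icc, Nat.mem_divisors] at hx ⊢
    obtain ⟨⟨hq1, hqn⟩, hegcd, hgcd0⟩ := hx
    have heq : e ∣ q := hegcd.trans (Nat.gcd_dvd_left q a)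
    have hea : e ∣ a := hegcd.trans (Nat.gcd_dvd_right q a)
    have hepos : 0 < e := Nat.pos_of_dvd_of_pos heq (by omega)
    refine ⟨⟨hea, by omega⟩, ?_, Nat.div_le_div_right hqn⟩
    rw [Nat.one_le_div_iff hepos]
    exact Nat.le_of_dvd (by omega) heq
  · rintro ⟨e, K⟩ hy
    simp only [Finset.mem_sigma, Finset.mem_Icc, Nat.mem_divisors] at hy ⊢
    obtain ⟨⟨hea, ha0⟩, hK1, hKn⟩ := hy
    have hepos : 0 < e := Nat.pos_of_dvd_of_pos hea ha
    constructor
    · constructor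
      · exact Nat.one_le_iff_ne_zero.mpr (by positivity)
      · calc e * K = K * e := mul_comm e K
        _ ≤ n := (Nat.le_div_iff_mul_le hepos).mp hKn
    · constructor
      · exact Nat.dvd_gcd (dvd_mul_right e K) hea
      · have : 0 < Nat.gcd (e*K) a := Nat.gcd_pos_of_pos_right _ ha
        omega
  · rintro ⟨q, e⟩ hx
    simp only [Finset.mem_sigma, Finset.mem_Icc, Nat.mem_divisors] at hx
    obtain ⟨⟨hq1, hqn⟩, hegcd, hgcd0⟩ := hx
    have heq : e ∣ q := hegcd.trans (Nat.gcd_dvd_left q a)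
    show (⟨e * (q / e), e⟩ : Σ _ : ℕ, ℕ) = ⟨q, e⟩
    rw [Nat.mul_div_cancel' heq]
  · rintro ⟨e, K⟩ hy
    simp only [Finset.mem_sigma, Finset.mem_Icc, Nat.mem_divisors] at hy
    obtain ⟨⟨hea, ha0⟩, hK1, hKn⟩ := hy
    have hepos : 0 < e := Nat.pos_of_dvd_of_pos hea ha
    show (⟨e, (e * K) / e⟩ : Σ _ : ℕ, ℕ) = ⟨e, K⟩
    rw [Nat.mul_div_cancel_left K hepos]
  · rintro ⟨q, e⟩ hx
    simp only [Finset.mem_sigma, Finset.mem_Icc, Nat.mem_divisors] at hx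
    obtain ⟨⟨hq1, hqn⟩, hegcd, hgcd0⟩ := hx
    have heq : e ∣ q := hegcd.trans (Nat.gcd_dvd_left q a)
    show G q * ((e:ℂ) * mu (q/e)) = (e:ℂ) * (mu (q/e) * G (e * (q/e)))
    rw [Nat.mul_div_cancel' heq]
    ring

lemma t_nat_of_real {h : ℕ → ℂ} {L : ℂ}
    (H : Tendsto (fun x : ℝ => h ⌊x⌋₊) atTop (nhds L)) : Tendsto h atTop (nhds L) := by
  have := H.comp tendsto_natCast_atTop_atTop (α := ℕ)
  apply this.congr
  intro n
  simp [Nat.floor_natCast]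

lemma t_real_of_nat {h : ℕ → ℂ} {L : ℂ} (H : Tendsto h atTop (nhds L)) :
    Tendsto (fun x : ℝ => h ⌊x⌋₊) atTop (nhds L) :=
  H.comp tendsto_nat_floor_atTop

lemma red_forward {G : ℕ → ℂ} (hR : ∀ a, 0 < a → RTendsto G a 0) :
    ∀ d, 0 < d → T0 (mdef G d 1) := by
  intro d
  induction d using Nat.strong_induction_on with
  | _ d IH =>
    intro hd
    have hRd := hR d hd
    have hnat : T0 (fun n : ℕ => ∑ e ∈ d.divisors, (e:ℂ) * mdef G e 1 (n/e)) := by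
      apply t_nat_of_real
      apply Filter.Tendsto.congr _ (hRd : Tendsto _ _ _)
      intro x
      exact rsd_eq G hd ⌊x⌋₊
    have herase : T0 (fun n : ℕ => ∑ e ∈ d.divisors.erase d, (e:ℂ) * mdef G e 1 (n/e)) := by
      have : Tendsto (fun n : ℕ => ∑ e ∈ d.divisors.erase d, (e:ℂ) * mdef G e 1 (n/e))
          atTop (nhds (∑ e ∈ d.divisors.erase d, 0)) := by
        apply tendsto_finset_sum
        intro e he
        have hemem := Finset.mem_of_mem_erase he
        have hene := Finset.ne_of_mem_erase he
        have hedvd : e ∣ d := (Nat.mem_divisors.mp hemem).1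
        have hepos : 0 < e := Nat.pos_of_dvd_of_pos hedvd hd
        have helt : e < d := lt_of_le_of_ne (Nat.le_of_dvd hd hedvd) hene
        have := (IH e helt hepos).comp_div hepos
        simpa [T0] using this.const_mul (e:ℂ)
      simpa [T0] using this
    have hdterm : T0 (fun n : ℕ => (d:ℂ) * mdef G d 1 (n/d)) := by
      have hsub := hnat.sub herase
      apply T0.congr _ hsub
      intro n
      have hmem : d ∈ d.divisors := Nat.mem_divisors_self d (by omega)
      rw [← Finset.add_sum_erase _ _ hmem]
      ring
    have : T0 (fun n : ℕ => mdef G d 1 (n/d)) := by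
      have := hdterm.const_mul ((d:ℂ)⁻¹)
      apply T0.congr _ this
      intro n
      rw [← mul_assoc, inv_mul_cancel₀ (by exact_mod_cast Nat.pos_iff_ne_zero.mp hd), one_mul]
    exact T0.of_comp_div hd this

lemma red_back {G : ℕ → ℂ} (hL : ∀ d, 0 < d → T0 (mdef G d 1)) :
    ∀ a, 0 < a → RTendsto G a 0 := by
  intro a ha
  unfold _root_.RTendsto RS
  have : Tendsto (fun x : ℝ => ∑ e ∈ a.divisors, (e:ℂ) * mdef G e 1 (⌊x⌋₊/e))
      atTop (nhds (∑ e ∈ a.divisors, 0)) := by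
    apply tendsto_finset_sum
    intro e he
    have hedvd := (Nat.mem_divisors.mp he).1
    have hepos : 0 < e := Nat.pos_of_dvd_of_pos hedvd ha
    have h1 : Tendsto (fun x : ℝ => (⌊x⌋₊ : ℕ) / e) atTop atTop :=
      (tendsto_div_const_atTop hepos).comp tendsto_nat_floor_atTop
    have h2 := (hL e hepos).comp h1
    simpa using h2.const_mul (e:ℂ)
  rw [Finset.sum_const_zero] at this
  apply this.congr
  intro x
  exact (rsd_eq G ha ⌊x⌋₊).symm

end Chunk11
section Chunk12
variable {G : ℕ → ℂ}

lemma ramCond_eq (hSB : {p : ℕ | IsSimplyBad G p}.Finite) :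
    ramCond G = ∏ p ∈ hSB.toFinset, p ^ (cmIndex G p).toNat := by
  rw [ramCond]
  have h := finprod_mem_coe_finset (fun p => p ^ (cmIndex G p).toNat) hSB.toFinset
  rw [hSB.coe_toFinset] at h
  exact h

lemma coprime_ramCond_iff (hSB : {p : ℕ | IsSimplyBad G p}.Finite) (r : ℕ) :
    Nat.Coprime r (ramCond G) ↔ Nat.Coprime r (∏ p ∈ hSB.toFinset, p) := by
  rw [ramCond_eq hSB, Nat.coprime_prod_right_iff, Nat.coprime_prod_right_iff]
  apply forall_congr'
  intro p
  apply imp_congr_right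
  intro hp
  have hsp : IsSimplyBad G p := hSB.mem_toFinset.mp hp
  have hw : 0 < (cmIndex G p).toNat := one_le_cm_toNat hsp.2.2
  exact Nat.coprime_pow_right_iff hw r p

lemma SS_eq_mdef (hSB : {p : ℕ | IsSimplyBad G p}.Finite) (x : ℝ) :
    SS G (ramCond G) x = mdef G 1 (∏ p ∈ hSB.toFinset, p) ⌊x⌋₊ := by
  unfold SS mdef
  refine Finset.sum_congr ?_ ?_
  · apply Finset.filter_congr
    intro r _
    exact coprime_ramCond_iff hSB r
  · intro K _
    rw [one_mul]
    ring

theorem stmt_4' (G : ℕ → ℂ) (hG : IsMult G)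
    (hfin : {p : ℕ | p.Prime ∧ IsBad G p}.Finite) :
    (∀ a : ℕ, 0 < a → RTendsto G a 0) ↔ STendsto G (ramCond G) 0 := by
  have hSB : {p : ℕ | IsSimplyBad G p}.Finite :=
    hfin.subset (fun p hp => ⟨hp.1, hp.2.1⟩)
  set T := hSB.toFinset with hT
  have hTprime : ∀ q ∈ T, q.Prime := fun q hq => (hSB.mem_toFinset.mp hq).1
  have hSlink : STendsto G (ramCond G) 0 ↔ T0 (mdef G 1 (∏ p ∈ T, p)) := by
    constructor
    · intro h
      apply t_nat_of_real
      apply Filter.Tendsto.congr _ (h : Tendsto _ _ _)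
      intro x
      exact SS_eq_mdef hSB x
    · intro h
      unfold _root_.STendsto
      have := t_real_of_nat h
      apply this.congr
      intro x
      exact (SS_eq_mdef hSB x).symm
  constructor
  · intro hR
    rw [hSlink]
    have hLall := red_forward hR
    exact forward_engine hG hLall T
      (fun q hq => ⟨(hSB.mem_toFinset.mp hq).1, (hSB.mem_toFinset.mp hq).2.2⟩)
      1 one_pos (Nat.coprime_one_left _)
  · intro hS
    have hbase : T0 (mdef G 1 (∏ p ∈ T, p)) := hSlink.mp hS
    have hstep1 : ∀ c : Finset ℕ, (∀ r ∈ c, OkPrime G r) → T0 (mdef G 1 (∏ r ∈ c, r)) := by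
      intro c hc
      apply back1 hG T hTprime hbase c
      intro r hr
      refine ⟨(hc r hr).1, ?_⟩
      rcases (hc r hr).2 with h1 | h1
      · left; exact hSB.mem_toFinset.mpr h1
      · right; exact h1
    have hLd : ∀ d, 0 < d → T0 (mdef G d 1) := by
      intro d hd
      have := back2 hG hstep1 d hd ∅ (by simp) (by simp)
      simpa using this
    exact red_back hLd

end Chunk12

/-- Characterization of multiplicative Ramanujan coefficients of the null function
(Theorem 9.1). -/
theorem stmt_4 (G : ℕ → ℂ) (hG : IsMult G)
    (hfin : {p : ℕ | p.Prime ∧ IsBad G p}.Finite) :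
    (∀ a : ℕ, 0 < a → RTendsto G a 0) ↔ STendsto G (ramCond G) 0 :=
  stmt_4' G hG hfin
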